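/- arXiv:0711.1151 — 2 statements merged into one kernel-verified Lean document; each statement's English description precedes it below -/
import Mathlib

section
/- Uniform cover inequality for sumsets: let S₁,…,Sₙ be finite nonempty subsets of a commutative semigroup, S_A = ∑_{i∈A} S_i, and S = S₁+⋯+Sₙ. If 𝒜 is a uniform k-cover of [n] (each i ∈ [n] lies in exactly k members counted with multiplicity), then |S|^k ≤ ∏_{A∈𝒜} |S_A|. -/
open Finset

/-- Iterated sumset of a list of finite subsets of a commutative semigroup:
`sumList [T₁,…,Tₘ] = T₁ + ⋯ + Tₘ` (and `∅` for the empty list). -/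
def sumList {G : Type*} [AddCommSemigroup G] [DecidableEq G] :
    List (Finset G) → Finset G
  | [] => ∅
  | [T] => T
  | T :: U :: rest => Finset.image₂ (· + ·) T (sumList (U :: rest))

/-- The sumset `S_A = ∑_{i ∈ A} S i` in a commutative semigroup. -/
noncomputable def sumsetOn {G : Type*} [AddCommSemigroup G] [DecidableEq G] {n : ℕ}
    (S : Fin n → Finset G) (A : Finset (Fin n)) : Finset G :=
  sumList (A.toList.map S)

open scoped Pointwise
open scoped NNReal



section NPart

variable {M : Type*} [AddCommMonoid M] [DecidableEq M]

/-- The "new part": `(X + {σ}) \ ⋃_{e ∈ E} (X + {e})`. -/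
def nPart (X : Finset M) (σ : M) (E : Finset M) : Finset M :=
  (X + {σ}) \ E.sup (fun e => X + {e})

lemma mem_add_singleton {X : Finset M} {z a : M} : a ∈ X + {z} ↔ ∃ u ∈ X, u + z = a := by
  rw [Finset.mem_add]
  simp

lemma mem_nPart {X : Finset M} {σ : M} {E : Finset M} {w : M} :
    w ∈ nPart X σ E ↔ (∃ u ∈ X, u + σ = w) ∧ ∀ e ∈ E, ∀ u ∈ X, u + e ≠ w := by
  unfold nPart
  rw [Finset.mem_sdiff, mem_add_singleton]
  apply and_congr_right'
  rw [Finset.mem_sup]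
  push_neg
  constructor
  · intro h e he u hu hadd
    exact h e he (mem_add_singleton.mpr ⟨u, hu, hadd⟩)
  · intro h e he hmem
    obtain ⟨u, hu, hadd⟩ := mem_add_singleton.mp hmem
    exact h e he u hu hadd

variable (W : Finset M) (σ : M) (E : Finset M)

/-- enumeration of `W` -/
noncomputable def lc (t : ℕ) : M := W.toList.getD t σ

/-- exclusion set at layer `t` -/
noncomputable def lE (t : ℕ) : Finset M :=
  (W + E) ∪ (Finset.range t).image (fun s => lc W σ s + σ)

lemma lc_mem {t : ℕ} (ht : t < W.toList.length) : lc W σ t ∈ W := by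
  rw [← Finset.mem_toList, lc, List.getD_eq_getElem _ _ ht]
  exact List.getElem_mem ht

lemma layer_subset (Y : Finset M) {t : ℕ} (ht : t < W.toList.length) :
    nPart Y (lc W σ t + σ) (lE W σ E t) ⊆ nPart (W + Y) σ E := by
  intro w hw
  rw [mem_nPart] at hw ⊢
  obtain ⟨⟨u, hu, huw⟩, hexc⟩ := hw
  constructor
  · refine ⟨lc W σ t + u, Finset.add_mem_add (lc_mem W σ ht) hu, ?_⟩
    rw [← huw]; abel
  · intro e he v hv hveq
    obtain ⟨a, ha, u', hu', rfl⟩ := Finset.mem_add.mp hv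
    refine hexc (a + e) (Finset.mem_union_left _ (Finset.add_mem_add ha he)) u' hu' ?_
    rw [← hveq]; abel

lemma layer_disjoint (Y : Finset M) {s t : ℕ} (hst : s < t) :
    Disjoint (nPart Y (lc W σ s + σ) (lE W σ E s)) (nPart Y (lc W σ t + σ) (lE W σ E t)) := by
  rw [Finset.disjoint_left]
  intro w hws hwt
  rw [mem_nPart] at hws hwt
  obtain ⟨⟨u, hu, huw⟩, _⟩ := hws
  refine hwt.2 (lc W σ s + σ) ?_ u hu huw
  exact Finset.mem_union_right _ (Finset.mem_image.mpr ⟨s, Finset.mem_range.mpr hst, rfl⟩)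

lemma layer_cover (Y : Finset M) :
    nPart (W + Y) σ E ⊆
      (Finset.range W.toList.length).biUnion (fun t => nPart Y (lc W σ t + σ) (lE W σ E t)) := by
  intro w hw
  rw [mem_nPart] at hw
  obtain ⟨⟨v, hv, hvw⟩, hexc⟩ := hw
  obtain ⟨a, ha, u, hu, rfl⟩ := Finset.mem_add.mp hv
  obtain ⟨t₀, ht₀, hget⟩ := List.mem_iff_getElem.mp (Finset.mem_toList.mpr ha)
  set Tw := (Finset.range W.toList.length).filter
    (fun t => ∃ u' ∈ Y, u' + (lc W σ t + σ) = w) with hTw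
  have hT0 : t₀ ∈ Tw := by
    refine Finset.mem_filter.mpr ⟨Finset.mem_range.mpr ht₀, ⟨u, hu, ?_⟩⟩
    rw [lc, List.getD_eq_getElem _ _ ht₀, hget, ← hvw]; abel
  have hTne : Tw.Nonempty := ⟨t₀, hT0⟩
  set t := Tw.min' hTne with htdef
  have htT : t ∈ Tw := Finset.min'_mem _ _
  have htrange : t ∈ Finset.range W.toList.length := (Finset.mem_filter.mp htT).1
  obtain ⟨u', hu', hu'w⟩ := (Finset.mem_filter.mp htT).2
  refine Finset.mem_biUnion.mpr ⟨t, htrange, mem_nPart.mpr ⟨⟨u', hu', hu'w⟩, ?_⟩⟩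
  intro e' he' v' hv' hv'w
  rcases Finset.mem_union.mp he' with h1 | h2
  · obtain ⟨a', ha', e, he, rfl⟩ := Finset.mem_add.mp h1
    refine hexc e he (a' + v') (Finset.add_mem_add ha' hv') ?_
    rw [← hv'w]; abel
  · obtain ⟨s, hs, rfl⟩ := Finset.mem_image.mp h2
    rw [Finset.mem_range] at hs
    have hsT : s ∈ Tw := by
      refine Finset.mem_filter.mpr ⟨Finset.mem_range.mpr ?_, ⟨v', hv', hv'w⟩⟩
      exact lt_trans hs (Finset.mem_range.mp htrange)
    have := Finset.min'_le _ _ hsT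
    omega

lemma layer_card (Y : Finset M) :
    (nPart (W + Y) σ E).card =
      ∑ t ∈ Finset.range W.toList.length, (nPart Y (lc W σ t + σ) (lE W σ E t)).card := by
  have hdisj : ∀ s ∈ Finset.range W.toList.length, ∀ t ∈ Finset.range W.toList.length,
      s ≠ t → Disjoint (nPart Y (lc W σ s + σ) (lE W σ E s))
        (nPart Y (lc W σ t + σ) (lE W σ E t)) := by
    intro s _ t _ hst
    rcases lt_or_gt_of_ne hst with h | h
    · exact layer_disjoint W σ E Y h
    · exact (layer_disjoint W σ E Y h).symm
  rw [← Finset.card_biUnion hdisj]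
  congr 1
  apply Finset.Subset.antisymm
  · exact layer_cover W σ E Y
  · refine Finset.biUnion_subset.mpr (fun t ht => ?_)
    exact layer_subset W σ E Y (Finset.mem_range.mp ht)

lemma layer_single (Y : Finset M) :
    ((Finset.range W.toList.length).filter
        (fun t => (nPart Y (lc W σ t + σ) (lE W σ E t)).Nonempty)).card
      ≤ (nPart W σ E).card := by
  apply Finset.card_le_card_of_injOn (fun t => lc W σ t + σ)
  · intro t ht
    obtain ⟨htr, ⟨w, hw⟩⟩ := Finset.mem_filter.mp ht
    rw [Finset.mem_range] at htr
    rw [mem_nPart] at hw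
    obtain ⟨⟨u, hu, huw⟩, hexc⟩ := hw
    simp only [Finset.mem_coe]; rw [mem_nPart]
    refine ⟨⟨lc W σ t, lc_mem W σ htr, rfl⟩, ?_⟩
    intro e he a' ha' heq
    refine hexc (a' + e) (Finset.mem_union_left _ (Finset.add_mem_add ha' he)) u hu ?_
    rw [show u + (a' + e) = u + (a' + e) from rfl, show u + (a' + e) = (a' + e) + u by abel, heq]
    rw [← huw]; abel
  · intro s hs t ht hst
    have hst' : lc W σ s + σ = lc W σ t + σ := hst
    by_contra hne
    rcases lt_or_gt_of_ne hne with h | h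
    · obtain ⟨_, ⟨w, hw⟩⟩ := Finset.mem_filter.mp ht
      rw [mem_nPart] at hw
      obtain ⟨⟨u, hu, huw⟩, hexc⟩ := hw
      refine hexc (lc W σ s + σ)
        (Finset.mem_union_right _ (Finset.mem_image.mpr ⟨s, Finset.mem_range.mpr h, rfl⟩)) u hu ?_
      rw [hst', huw]
    · obtain ⟨_, ⟨w, hw⟩⟩ := Finset.mem_filter.mp hs
      rw [mem_nPart] at hw
      obtain ⟨⟨u, hu, huw⟩, hexc⟩ := hw
      refine hexc (lc W σ t + σ)
        (Finset.mem_union_right _ (Finset.mem_image.mpr ⟨t, Finset.mem_range.mpr h, rfl⟩)) u hu ?_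
      rw [← hst', huw]

end NPart


section Helpers

lemma mprod_map_le {β : Type*} (s : Multiset β) (f g : β → ℕ) (h : ∀ b ∈ s, f b ≤ g b) :
    (s.map f).prod ≤ (s.map g).prod := by
  induction s using Multiset.induction_on with
  | empty => simp
  | cons b s ih =>
    simp only [Multiset.map_cons, Multiset.prod_cons]
    exact Nat.mul_le_mul (h b (Multiset.mem_cons_self b s))
      (ih fun b' hb' => h b' (Multiset.mem_cons_of_mem hb'))

lemma mprod_filter_map {β : Type*} (s : Multiset β) (p : β → Prop) [DecidablePred p] (f : β → ℕ) :
    ((s.filter p).map f).prod = (s.map (fun b => if p b then f b else 1)).prod := by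
  induction s using Multiset.induction_on with
  | empty => simp
  | cons b s ih =>
    by_cases hb : p b
    · rw [Multiset.filter_cons_of_pos _ hb]
      simp only [Multiset.map_cons, Multiset.prod_cons, ih, if_pos hb]
    · rw [Multiset.filter_cons_of_neg _ hb]
      simp only [Multiset.map_cons, Multiset.prod_cons, ih, if_neg hb, one_mul]

lemma mprod_toList {β : Type*} (s : Multiset β) (g : β → ℕ) :
    (s.toList.map g).prod = (s.map g).prod := by
  rw [← Multiset.prod_coe, ← Multiset.map_coe, Multiset.coe_toList]

lemma nnprod_rpow {ι : Type*} (s : Finset ι) (g : ι → ℝ≥0) (r : ℝ) :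
    (∏ i ∈ s, g i) ^ r = ∏ i ∈ s, g i ^ r := by
  induction s using Finset.cons_induction with
  | empty => simp [NNReal.one_rpow]
  | cons a s ha ih => rw [Finset.prod_cons, Finset.prod_cons, NNReal.mul_rpow, ih]

lemma holder_nnreal {τ : Type*} {k : ℕ} (hk : 0 < k) (T : Finset τ)
    (f : τ → ℝ≥0) (a : Fin k → τ → ℝ≥0) (P : ℝ≥0)
    (h : ∀ t ∈ T, f t ^ k ≤ P * ∏ j, a j t) :
    (∑ t ∈ T, f t) ^ k ≤ P * ∏ j, ∑ t ∈ T, a j t := by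
  by_cases hzero : P = 0 ∨ ∃ j : Fin k, (∑ t ∈ T, a j t) = 0
  · -- degenerate: f ≡ 0 on T
    have hf : ∀ t ∈ T, f t = 0 := by
      intro t ht
      have h0 : P * ∏ j, a j t = 0 := by
        rcases hzero with hP | ⟨j, hj⟩
        · rw [hP, zero_mul]
        · have haj : a j t = 0 := by
            have := (Finset.sum_eq_zero_iff).mp hj t ht
            exact this
          rw [Finset.prod_eq_zero (Finset.mem_univ j) haj, mul_zero]
      have := h t ht
      rw [h0] at this
      exact pow_eq_zero_iff hk.ne' |>.mp (le_antisymm this (zero_le))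
    rw [Finset.sum_eq_zero hf, zero_pow hk.ne']
    exact zero_le
  push_neg at hzero
  obtain ⟨hP, hX⟩ := hzero
  set X : Fin k → ℝ≥0 := fun j => ∑ t ∈ T, a j t with hXdef
  set r : ℝ := (k : ℝ)⁻¹ with hrdef
  have hkR : (k : ℝ) ≠ 0 := Nat.cast_ne_zero.mpr hk.ne'
  have hr0 : 0 ≤ r := by positivity
  have hrk : r * (k : ℝ) = 1 := inv_mul_cancel₀ hkR
  -- step 1: pointwise bound
  have key1 : ∀ t ∈ T, f t ≤ P ^ r * ∏ j, (a j t) ^ r := by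
    intro t ht
    have h1 := NNReal.rpow_le_rpow (NNReal.coe_le_coe.mp (by exact_mod_cast h t ht)) hr0
    rw [← NNReal.rpow_natCast (f t) k, ← NNReal.rpow_mul, mul_comm, hrk, NNReal.rpow_one,
      NNReal.mul_rpow, nnprod_rpow] at h1
    exact h1
  -- step 2: AM-GM per t
  have key2 : ∀ t ∈ T, ∏ j, (a j t) ^ r ≤ (∏ j, X j ^ r) * ∑ j, (k : ℝ≥0)⁻¹ * (a j t / X j) := by
    intro t ht
    have hfac : ∀ j : Fin k, (a j t) ^ r = X j ^ r * (a j t / X j) ^ r := by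
      intro j
      rw [NNReal.div_rpow, mul_comm, div_mul_cancel₀]
      exact fun hXr => hX j (by
        have := NNReal.rpow_eq_zero_iff.mp hXr
        exact this.1)
    calc ∏ j, (a j t) ^ r = ∏ j, (X j ^ r * (a j t / X j) ^ r) := by
            exact Finset.prod_congr rfl fun j _ => hfac j
      _ = (∏ j, X j ^ r) * ∏ j, (a j t / X j) ^ r := Finset.prod_mul_distrib
      _ ≤ (∏ j, X j ^ r) * ∑ j, (k : ℝ≥0)⁻¹ * (a j t / X j) := by
            refine mul_le_mul_right ?_ _
            have hw : ∑ _j : Fin k, (k : ℝ≥0)⁻¹ = 1 := by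
              rw [Finset.sum_const, Finset.card_univ, Fintype.card_fin, nsmul_eq_mul,
                mul_inv_cancel₀ (by exact_mod_cast hk.ne' : (k : ℝ≥0) ≠ 0)]
            have := NNReal.geom_mean_le_arith_mean_weighted Finset.univ
              (fun _ => (k : ℝ≥0)⁻¹) (fun j => a j t / X j) hw
            have hcr : (((k : ℝ≥0)⁻¹ : ℝ≥0) : ℝ) = r := by
              rw [hrdef]; push_cast; rfl
            have hcoe : ∀ j : Fin k, (a j t / X j) ^ (((k : ℝ≥0)⁻¹ : ℝ≥0) : ℝ)
                = (a j t / X j) ^ r := fun j => by rw [hcr]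
            calc ∏ j, (a j t / X j) ^ r = ∏ j, (a j t / X j) ^ (((k : ℝ≥0)⁻¹ : ℝ≥0) : ℝ) :=
                  Finset.prod_congr rfl fun j _ => (hcoe j).symm
              _ ≤ ∑ j, (k : ℝ≥0)⁻¹ * (a j t / X j) := this
  -- combine
  have key3 : ∑ t ∈ T, f t ≤ P ^ r * ∏ j : Fin k, X j ^ r := by
    calc ∑ t ∈ T, f t ≤ ∑ t ∈ T, P ^ r * ((∏ j, X j ^ r) * ∑ j, (k : ℝ≥0)⁻¹ * (a j t / X j)) := by
          refine Finset.sum_le_sum fun t ht => le_trans (key1 t ht) ?_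
          exact mul_le_mul_right (key2 t ht) _
      _ = P ^ r * ((∏ j, X j ^ r) * ∑ t ∈ T, ∑ j, (k : ℝ≥0)⁻¹ * (a j t / X j)) := by
          rw [← Finset.mul_sum, ← Finset.mul_sum]
      _ = P ^ r * ((∏ j, X j ^ r) * 1) := by
          congr 2
          rw [Finset.sum_comm]
          have : ∀ j : Fin k, ∑ t ∈ T, (k : ℝ≥0)⁻¹ * (a j t / X j) = (k : ℝ≥0)⁻¹ := by
            intro j
            rw [← Finset.mul_sum, ← Finset.sum_div]
            have hXj : ∑ i ∈ T, a j i = X j := rfl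
            rw [hXj, div_self (hX j), mul_one]
          rw [Finset.sum_congr rfl fun j _ => this j]
          rw [Finset.sum_const, Finset.card_univ, Fintype.card_fin, nsmul_eq_mul,
            mul_inv_cancel₀ (by exact_mod_cast hk.ne' : (k : ℝ≥0) ≠ 0)]
      _ = P ^ r * ∏ j, X j ^ r := by rw [mul_one]
  have key4 : (∑ t ∈ T, f t) ^ k ≤ (P ^ r * ∏ j, X j ^ r) ^ k := pow_le_pow_left₀ (zero_le) key3 k
  refine le_trans key4 (le_of_eq ?_)
  rw [← nnprod_rpow, ← NNReal.mul_rpow, ← NNReal.rpow_natCast (_ ^ r) k, ← NNReal.rpow_mul, hrk,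
    NNReal.rpow_one]

lemma holder_nat {τ : Type*} {k : ℕ} (hk : 0 < k) (T : Finset τ)
    (f : τ → ℕ) (a : Fin k → τ → ℕ) (P : ℕ)
    (h : ∀ t ∈ T, f t ^ k ≤ P * ∏ j, a j t) :
    (∑ t ∈ T, f t) ^ k ≤ P * ∏ j, ∑ t ∈ T, a j t := by
  have := holder_nnreal hk T (fun t => (f t : ℝ≥0)) (fun j t => (a j t : ℝ≥0)) (P : ℝ≥0)
    (fun t ht => by push_cast; exact_mod_cast h t ht)
  exact_mod_cast this

lemma holder_list {τ : Type*} (T : Finset τ) (f : τ → ℕ) (L : List (τ → ℕ)) (hL : L ≠ []) (P : ℕ)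
    (h : ∀ t ∈ T, f t ^ L.length ≤ P * (L.map (fun na => na t)).prod) :
    (∑ t ∈ T, f t) ^ L.length ≤ P * (L.map (fun na => ∑ t ∈ T, na t)).prod := by
  have hlen : 0 < L.length := List.length_pos_iff.mpr hL
  have hmapprod : ∀ (g : (τ → ℕ) → ℕ), (L.map g).prod = ∏ j : Fin L.length, g (L.get j) := by
    intro g
    conv_lhs => rw [← List.ofFn_get L]
    rw [List.map_ofFn, List.prod_ofFn]
    rfl
  have := holder_nat hlen T f (fun j t => L.get j t) P (fun t ht => by
    rw [← hmapprod (fun na => na t)]; exact h t ht)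
  rw [hmapprod (fun na => ∑ t ∈ T, na t)]
  exact this

end Helpers

section Spade

variable {M : Type*} [AddCommMonoid M] [DecidableEq M]

lemma layer_trans (W : Finset M) (σ : M) (E : Finset M) (Y : Finset M) {t : ℕ}
    (ht : t < W.toList.length) :
    (nPart Y (lc W σ t + σ) (lE W σ E t)).card ≤ (nPart Y σ E).card := by
  have hsub : nPart Y (lc W σ t + σ) (lE W σ E t) ⊆ (nPart Y σ E).image (· + lc W σ t) := by
    intro w hw
    rw [mem_nPart] at hw
    obtain ⟨⟨u, hu, huw⟩, hexc⟩ := hw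
    refine Finset.mem_image.mpr ⟨u + σ, mem_nPart.mpr ⟨⟨u, hu, rfl⟩, ?_⟩, ?_⟩
    · intro e he u' hu' heq
      refine hexc (lc W σ t + e)
        (Finset.mem_union_left _ (Finset.add_mem_add (lc_mem W σ ht) he)) u' hu' ?_
      rw [show u' + (lc W σ t + e) = (u' + e) + lc W σ t by abel, heq, ← huw]
      abel
    · rw [← huw]; abel
  exact le_trans (Finset.card_le_card hsub) (Finset.card_image_le)

theorem spade {ι : Type*} [DecidableEq ι] (k : ℕ) (S : ι → Finset M) :
    ∀ V : Finset ι, V.Nonempty → (∀ i ∈ V, (S i).Nonempty) →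
    ∀ 𝒜 : Multiset (Finset ι), (∀ A ∈ 𝒜, A.Nonempty ∧ A ⊆ V) →
    (∀ i ∈ V, Multiset.card (𝒜.filter (fun A => i ∈ A)) = k) →
    ∀ (σ : M) (E : Finset M),
      (nPart (∑ i ∈ V, S i) σ E).card ^ k ≤
        (𝒜.map (fun A => (nPart (∑ i ∈ A, S i) σ E).card)).prod := by
  intro V
  induction V using Finset.strongInduction with
  | _ V ih =>
  intro hV hS 𝒜 h𝒜 hcov σ E
  rcases Nat.eq_zero_or_pos k with hk0 | hk
  · subst hk0
    have h𝒜0 : 𝒜 = 0 := by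
      by_contra hne
      obtain ⟨A, hA⟩ := Multiset.exists_mem_of_ne_zero hne
      obtain ⟨i, hi⟩ := (h𝒜 A hA).1
      have hfil : A ∈ 𝒜.filter (fun A => i ∈ A) := Multiset.mem_filter.mpr ⟨hA, hi⟩
      have hpos : 0 < Multiset.card (𝒜.filter (fun A => i ∈ A)) :=
        Multiset.card_pos.mpr fun h0 => by
          rw [h0] at hfil; exact absurd hfil (Multiset.notMem_zero A)
      rw [hcov i ((h𝒜 A hA).2 hi)] at hpos
      omega
    rw [h𝒜0]
    simp
  obtain ⟨x, hx⟩ := hV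
  by_cases hV' : (V.erase x).Nonempty
  swap
  · -- base case: V = {x}
    have hVx : ∀ A ∈ 𝒜, A = {x} := by
      intro A hA
      have hsub : A ⊆ {x} := by
        intro y hy
        by_contra hyx
        rw [Finset.mem_singleton] at hyx
        exact hV' ⟨y, Finset.mem_erase.mpr ⟨hyx, (h𝒜 A hA).2 hy⟩⟩
      rcases Finset.subset_singleton_iff.mp hsub with h0 | h1
      · exact absurd h0 (h𝒜 A hA).1.ne_empty
      · exact h1
    have hVeq : V = {x} := by
      apply Finset.Subset.antisymm
      · intro y hy
        by_contra hyx
        rw [Finset.mem_singleton] at hyx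
        exact hV' ⟨y, Finset.mem_erase.mpr ⟨hyx, hy⟩⟩
      · intro y hy
        rw [Finset.mem_singleton] at hy
        subst hy; exact hx
    have hcard : Multiset.card 𝒜 = k := by
      have h1 := hcov x hx
      rwa [Multiset.filter_eq_self.mpr
        (fun A hA => by rw [hVx A hA]; exact Finset.mem_singleton_self x)] at h1
    have hconst : 𝒜.map (fun A => (nPart (∑ i ∈ A, S i) σ E).card)
        = Multiset.replicate k ((nPart (∑ i ∈ V, S i) σ E).card) := by
      rw [← hcard, ← Multiset.map_const']
      apply Multiset.map_congr rfl
      intro A hA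
      rw [hVx A hA, ← hVeq]
    rw [hconst, Multiset.prod_replicate]
  · -- main case
    have hxV' : x ∉ V.erase x := Finset.notMem_erase x V
    have hssub : V.erase x ⊂ V := Finset.erase_ssubset hx
    have hSx : (S x).Nonempty := hS x hx
    set Q : Finset ι → Finset M := fun A => ∑ i ∈ A, S i with hQ
    have hQV : Q V = S x + Q (V.erase x) := by
      rw [hQ]
      simp only []
      rw [← Finset.insert_erase hx, Finset.sum_insert hxV']
      simp [Finset.insert_erase hx]
    set ℬ := 𝒜.filter (fun A => x ∈ A) with hB
    set 𝒞 := 𝒜.filter (fun A => ¬ x ∈ A) with hC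
    have hsplit : ℬ + 𝒞 = 𝒜 := Multiset.filter_add_not _ 𝒜
    have hkB : Multiset.card ℬ = k := hcov x hx
    have hBmem : ∀ B ∈ ℬ, B ∈ 𝒜 ∧ x ∈ B := by
      intro B hBm
      rw [hB] at hBm
      exact Multiset.mem_filter.mp hBm
    set ℬ' := (ℬ.map (fun B => B.erase x)).filter (fun C => C.Nonempty) with hB'
    set 𝒜' := 𝒞 + ℬ' with hA'
    have h𝒜'mem : ∀ A ∈ 𝒜', A.Nonempty ∧ A ⊆ V.erase x := by
      intro A hA
      rw [hA', Multiset.mem_add] at hA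
      rcases hA with hA | hA
      · rw [hC] at hA
        have hmem := Multiset.mem_filter.mp hA
        exact ⟨(h𝒜 A hmem.1).1, Finset.subset_erase.mpr ⟨(h𝒜 A hmem.1).2, hmem.2⟩⟩
      · rw [hB'] at hA
        have hmem := Multiset.mem_filter.mp hA
        obtain ⟨B, hBm, rfl⟩ := Multiset.mem_map.mp hmem.1
        exact ⟨hmem.2, Finset.erase_subset_erase x (h𝒜 B (hBmem B hBm).1).2⟩
    have hcov' : ∀ i ∈ V.erase x, Multiset.card (𝒜'.filter (fun A => i ∈ A)) = k := by
      intro i hi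
      obtain ⟨hix, hiV⟩ := Finset.mem_erase.mp hi
      have h1 : 𝒜'.filter (fun A => i ∈ A)
          = 𝒞.filter (fun A => i ∈ A) + ℬ'.filter (fun A => i ∈ A) := by
        rw [hA', Multiset.filter_add]
      have h2 : Multiset.card (ℬ'.filter (fun A => i ∈ A))
          = Multiset.card (ℬ.filter (fun B => i ∈ B)) := by
        rw [hB', Multiset.filter_filter]
        rw [Multiset.filter_congr
          (fun C _ => ⟨fun (h : i ∈ C ∧ C.Nonempty) => h.1, fun h => ⟨h, ⟨i, h⟩⟩⟩)]
        rw [Multiset.filter_map, Multiset.card_map]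
        congr 1
        apply Multiset.filter_congr
        intro B _
        constructor
        · intro hmem
          exact Finset.mem_of_mem_erase hmem
        · intro hmem
          exact Finset.mem_erase.mpr ⟨hix, hmem⟩
      rw [h1, Multiset.card_add, h2]
      have h3 : Multiset.card (𝒞.filter (fun A => i ∈ A))
          + Multiset.card (ℬ.filter (fun A => i ∈ A)) = k := by
        rw [← Multiset.card_add, ← Multiset.filter_add, add_comm 𝒞 ℬ, hsplit]
        exact hcov i hiV
      omega
    set F : ℕ → Finset M := fun t => nPart (Q (V.erase x)) (lc (S x) σ t + σ) (lE (S x) σ E t)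
      with hF
    set N0 : Finset ι → ℕ := fun A => (nPart (Q A) σ E).card with hN0
    set Pc : ℕ := (𝒞.map N0).prod with hPc
    set aB : Finset ι → ℕ → ℕ := fun B t =>
      if (B.erase x).Nonempty
      then (nPart (Q (B.erase x)) (lc (S x) σ t + σ) (lE (S x) σ E t)).card
      else (if (F t).Nonempty then 1 else 0) with haB
    have step1 : ∀ t ∈ Finset.range (S x).toList.length, (F t).card ^ k ≤ Pc * (ℬ.map (fun B => aB B t)).prod := by
      intro t ht
      by_cases hFt : (F t).Nonempty
      · have hIH := ih (V.erase x) hssub hV'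
          (fun i hi => hS i (Finset.mem_of_mem_erase hi)) 𝒜' h𝒜'mem hcov'
          (lc (S x) σ t + σ) (lE (S x) σ E t)
        refine le_trans hIH ?_
        rw [hA', Multiset.map_add, Multiset.prod_add]
        refine Nat.mul_le_mul ?_ (le_of_eq ?_)
        · refine mprod_map_le 𝒞 _ _ (fun C _ => ?_)
          exact layer_trans (S x) σ E (Q C) (Finset.mem_range.mp ht)
        · rw [hB', mprod_filter_map, Multiset.map_map]
          refine congrArg _ (Multiset.map_congr rfl fun B _ => ?_)
          by_cases hBe : (B.erase x).Nonempty
          · simp only [Function.comp_apply, haB, if_pos hBe]; rfl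
          · simp only [Function.comp_apply, haB, if_neg hBe, if_pos hFt]
      · have hc0 : (F t).card = 0 := by
          rw [Finset.card_eq_zero]
          exact Finset.not_nonempty_iff_eq_empty.mp hFt
        rw [hc0, zero_pow hk.ne']
        exact Nat.zero_le _
    have step2 : ∀ B ∈ ℬ, ∑ t ∈ Finset.range (S x).toList.length, aB B t ≤ N0 B := by
      intro B hBm
      obtain ⟨hB𝒜, hxB⟩ := hBmem B hBm
      by_cases hBe : (B.erase x).Nonempty
      · have haBt : ∀ t, aB B t
            = (nPart (Q (B.erase x)) (lc (S x) σ t + σ) (lE (S x) σ E t)).card :=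
          fun t => by rw [haB]; exact if_pos hBe
        rw [Finset.sum_congr rfl (fun t _ => haBt t)]
        have hQB : Q B = S x + Q (B.erase x) := by
          rw [hQ]
          simp only []
          rw [← Finset.insert_erase hxB, Finset.sum_insert (Finset.notMem_erase x B)]
          simp [Finset.insert_erase hxB]
        have hlc := layer_card (S x) σ E (Q (B.erase x))
        rw [hN0]
        simp only []
        rw [hQB, hlc]
      · have hBx : B = {x} := by
          have hBsub : B ⊆ {x} := by
            intro y hy
            by_contra hyx
            rw [Finset.mem_singleton] at hyx
            exact hBe ⟨y, Finset.mem_erase.mpr ⟨hyx, hy⟩⟩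
          rcases Finset.subset_singleton_iff.mp hBsub with h0 | h1
          · exact absurd h0 (h𝒜 B hB𝒜).1.ne_empty
          · exact h1
        have haBt : ∀ t, aB B t = if (F t).Nonempty then 1 else 0 :=
          fun t => by rw [haB]; exact if_neg hBe
        rw [Finset.sum_congr rfl (fun t _ => haBt t)]
        rw [← Finset.card_filter]
        have hsing := layer_single (S x) σ E (Q (V.erase x))
        have hQBx : Q B = S x := by
          rw [hQ]
          simp only []
          rw [hBx, Finset.sum_singleton]
        rw [hN0]
        simp only []
        rw [hQBx]
        exact hsing
    have hLHS : (nPart (Q V) σ E).card = ∑ t ∈ Finset.range (S x).toList.length, (F t).card := by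
      rw [hQV]
      exact layer_card (S x) σ E (Q (V.erase x))
    set L : List (ℕ → ℕ) := ℬ.toList.map aB with hL
    have hLlen : L.length = k := by
      rw [hL, List.length_map, Multiset.length_toList, hkB]
    have hLne : L ≠ [] := by
      intro h0
      rw [h0] at hLlen
      simp at hLlen
      omega
    have hold := holder_list (Finset.range (S x).toList.length) (fun t => (F t).card) L hLne Pc (by
      intro t ht
      rw [hLlen, hL, List.map_map]
      have hco : ((fun na : ℕ → ℕ => na t) ∘ aB) = fun B => aB B t := rfl
      rw [hco, mprod_toList]
      exact step1 t ht)
    rw [hLlen] at hold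
    calc (nPart (Q V) σ E).card ^ k
        = (∑ t ∈ Finset.range (S x).toList.length, (F t).card) ^ k := by rw [hLHS]
      _ ≤ Pc * ((L).map (fun na => ∑ t ∈ Finset.range (S x).toList.length, na t)).prod := hold
      _ = Pc * (ℬ.map (fun B => ∑ t ∈ Finset.range (S x).toList.length, aB B t)).prod := by
          rw [hL, List.map_map]
          have hco : ((fun na : ℕ → ℕ => ∑ t ∈ Finset.range (S x).toList.length, na t) ∘ aB)
              = fun B => ∑ t ∈ Finset.range (S x).toList.length, aB B t := rfl
          rw [hco, mprod_toList]
      _ ≤ Pc * (ℬ.map N0).prod := Nat.mul_le_mul_left _ (mprod_map_le ℬ _ _ step2)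
      _ = (𝒞.map N0).prod * (ℬ.map N0).prod := by rw [hPc]
      _ = (𝒜.map N0).prod := by
          rw [← hsplit, Multiset.map_add, Multiset.prod_add, mul_comm]

end Spade


section Bridge

instance withZeroDecEq {G : Type*} [DecidableEq G] : DecidableEq (WithZero G) :=
  inferInstanceAs (DecidableEq (Option G))

variable {G : Type*} [AddCommSemigroup G] [DecidableEq G]

/-- image of a finset under the coercion into `WithZero G` -/
noncomputable def wImg (T : Finset G) : Finset (WithZero G) :=
  T.image (fun (a : G) => (a : WithZero G))

lemma wImg_card (T : Finset G) : (wImg T).card = T.card :=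
  Finset.card_image_of_injective _ (fun a b h => WithZero.coe_inj.mp h)

lemma wImg_nonempty {T : Finset G} (h : T.Nonempty) : (wImg T).Nonempty :=
  h.image _

lemma wImg_add (X Y : Finset G) : wImg (Finset.image₂ (· + ·) X Y) = wImg X + wImg Y := by
  rw [Finset.add_def]
  unfold wImg
  exact Finset.image_image₂_distrib (fun a b => WithZero.coe_add a b)

lemma sumList_image : ∀ l : List (Finset G), l ≠ [] →
    wImg (sumList l) = (l.map wImg).sum
  | [], h => absurd rfl h
  | [T], _ => by simp [sumList]
  | T :: U :: rest, _ => by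
    rw [show sumList (T :: U :: rest) = Finset.image₂ (· + ·) T (sumList (U :: rest)) from rfl]
    rw [wImg_add, sumList_image (U :: rest) (List.cons_ne_nil U rest)]
    simp [List.map_cons, List.sum_cons]

lemma sumsetOn_image {n : ℕ} (S : Fin n → Finset G) (A : Finset (Fin n)) (hA : A.Nonempty) :
    wImg (sumsetOn S A) = ∑ i ∈ A, wImg (S i) := by
  unfold sumsetOn
  have hne : A.toList.map S ≠ [] := by
    simp only [ne_eq, List.map_eq_nil_iff, Finset.toList_eq_nil]
    exact hA.ne_empty
  rw [sumList_image _ hne, List.map_map]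
  exact Finset.sum_map_toList A (wImg ∘ S)

lemma sumsetOn_card {n : ℕ} (S : Fin n → Finset G) (A : Finset (Fin n)) (hA : A.Nonempty) :
    (sumsetOn S A).card = (∑ i ∈ A, wImg (S i)).card := by
  rw [← sumsetOn_image S A hA, wImg_card]

end Bridge


/-- Uniform cover inequality for sumsets: if `𝒜` is a uniform `k`-cover of `[n]`
then `|S|^k ≤ ∏_{A∈𝒜} |S_A|`. -/
theorem sumset_uniform_cover_inequality {G : Type*} [AddCommSemigroup G] [DecidableEq G]
    {n k : ℕ} (hn : 0 < n) (S : Fin n → Finset G) (hS : ∀ i, (S i).Nonempty)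
    (𝒜 : Multiset (Finset (Fin n))) (h𝒜 : ∀ A ∈ 𝒜, Finset.Nonempty A)
    (hcov : ∀ i : Fin n, Multiset.card (𝒜.filter (fun A => i ∈ A)) = k) :
    (sumsetOn S univ).card ^ k ≤ (𝒜.map (fun A => (sumsetOn S A).card)).prod := by
  have huniv : (Finset.univ : Finset (Fin n)).Nonempty := ⟨⟨0, hn⟩, Finset.mem_univ _⟩
  have hnp : ∀ X : Finset (WithZero G), nPart X 0 ∅ = X := by
    intro X
    unfold nPart
    rw [Finset.sup_empty]
    have h1 : X + {(0 : WithZero G)} = X := by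
      rw [show ({(0 : WithZero G)} : Finset (WithZero G)) = (0 : Finset (WithZero G)) from rfl,
        add_zero]
    rw [h1, Finset.bot_eq_empty, Finset.sdiff_empty]
  have main := spade (M := WithZero G) (ι := Fin n) k (fun i => wImg (S i)) Finset.univ huniv
    (fun i _ => wImg_nonempty (hS i)) 𝒜 (fun A hA => ⟨h𝒜 A hA, Finset.subset_univ A⟩)
    (fun i _ => hcov i) 0 ∅
  rw [hnp] at main
  have hL : (sumsetOn S univ).card = (∑ i ∈ Finset.univ, wImg (S i)).card :=
    sumsetOn_card S Finset.univ huniv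
  have hR : 𝒜.map (fun A => (nPart (∑ i ∈ A, wImg (S i)) 0 ∅).card)
      = 𝒜.map (fun A => (sumsetOn S A).card) :=
    Multiset.map_congr rfl fun A hA => by rw [hnp, ← sumsetOn_card S A (h𝒜 A hA)]
  rw [hL]
  rw [← hR]
  exact main
end

section
/- Sharpness of the sumset inequality: there exist finite sets of integers A, B₁,…,B_k and C ⊆ B₁+⋯+B_k achieving equality |A+C|^k = |C|^{k-1} ∏_{i=1}^k |A+B_i|; for example A = {1,…,n}, C = B₁ = {0,n}, B₂ = ⋯ = B_k = {0} gives |A+C| = 2n, |C| = 2, |A+B₁| = 2n, |A+B_i| = n for i ≥ 2. -/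
open Finset Pointwise

lemma aux_AC {n : ℕ} (hn : 0 < n) :
    (Finset.Icc (1 : ℤ) (n : ℤ)) + ({0, (n : ℤ)} : Finset ℤ)
      = Finset.Icc (1 : ℤ) (2 * n : ℤ) := by
  ext x
  simp only [Finset.mem_add, Finset.mem_Icc, Finset.mem_insert, Finset.mem_singleton]
  constructor
  · rintro ⟨a, ha, c, hc, rfl⟩
    rcases hc with rfl | rfl <;> omega
  · intro hx
    by_cases h : x ≤ (n : ℤ)
    · exact ⟨x, by omega, 0, Or.inl rfl, by ring⟩
    · exact ⟨x - n, by omega, n, Or.inr rfl, by ring⟩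

/-- Sharpness of the sumset inequality: with `A = {1,…,n}`, `C = B₁ = {0,n}`,
`B₂ = ⋯ = B_k = {0}` one gets `|A+C| = 2n`, `|C| = 2`, `|A+B₁| = 2n`,
`|A+Bᵢ| = n` for `i ≥ 2`, and equality `|A+C|^k = |C|^{k-1} ∏ᵢ |A+Bᵢ|`. -/
theorem sumset_GyMR_sharp {n k : ℕ} (hn : 0 < n) (hk : 0 < k)
    (A C : Finset ℤ) (B : Fin k → Finset ℤ)
    (hA : A = Finset.Icc (1 : ℤ) (n : ℤ)) (hC : C = {0, (n : ℤ)})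
    (hB : B = fun i => if i = ⟨0, hk⟩ then ({0, (n : ℤ)} : Finset ℤ) else {0}) :
    C ⊆ ∑ i, B i ∧
    (A + C).card = 2 * n ∧ C.card = 2 ∧ (A + B ⟨0, hk⟩).card = 2 * n ∧
    (∀ i, i ≠ ⟨0, hk⟩ → (A + B i).card = n) ∧
    (A + C).card ^ k = C.card ^ (k - 1) * ∏ i, (A + B i).card := by
  subst hA hC hB
  have hzero : ({0} : Finset ℤ) = (0 : Finset ℤ) := rfl
  have hsum : (∑ i : Fin k, if i = ⟨0, hk⟩ then ({0, (n : ℤ)} : Finset ℤ) else {0})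
      = ({0, (n : ℤ)} : Finset ℤ) := by
    rw [show (fun i : Fin k => if i = ⟨0, hk⟩ then ({0, (n : ℤ)} : Finset ℤ) else {0})
      = (fun i : Fin k => if i = ⟨0, hk⟩ then ({0, (n : ℤ)} : Finset ℤ) else 0) from rfl]
    simp
  have hcardAC : ((Finset.Icc (1 : ℤ) (n : ℤ)) + ({0, (n : ℤ)} : Finset ℤ)).card = 2 * n := by
    rw [aux_AC hn]
    rw [Int.card_Icc]
    simp
    omega
  have hcardC : ({0, (n : ℤ)} : Finset ℤ).card = 2 := by
    rw [Finset.card_insert_of_notMem (by simp; exact_mod_cast hn.ne)]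
    simp
  have hcardA : (Finset.Icc (1 : ℤ) (n : ℤ)).card = n := by
    rw [Int.card_Icc]; simp
  have hAB0 : ((Finset.Icc (1 : ℤ) (n : ℤ)) +
      (if (⟨0, hk⟩ : Fin k) = ⟨0, hk⟩ then ({0, (n : ℤ)} : Finset ℤ) else {0})).card = 2 * n := by
    rw [if_pos rfl]; exact hcardAC
  refine ⟨by rw [hsum], hcardAC, hcardC, hAB0, ?_, ?_⟩
  · intro i hi
    simp only [if_neg hi]
    rw [show ({0} : Finset ℤ) = (0 : Finset ℤ) from rfl, add_zero, hcardA]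
  · have hprod : (∏ i : Fin k, ((Finset.Icc (1 : ℤ) (n : ℤ)) +
        (if i = ⟨0, hk⟩ then ({0, (n : ℤ)} : Finset ℤ) else {0})).card)
        = 2 * n * n ^ (k - 1) := by
      rw [← Finset.prod_erase_mul _ _ (Finset.mem_univ (⟨0, hk⟩ : Fin k))]
      rw [if_pos rfl, hcardAC]
      rw [Finset.prod_congr rfl (fun i hi => by
        rw [if_neg (Finset.ne_of_mem_erase hi),
          show ({0} : Finset ℤ) = (0 : Finset ℤ) from rfl, add_zero, hcardA])]
      rw [Finset.prod_const, Finset.card_erase_of_mem (Finset.mem_univ _), Finset.card_univ,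
        Fintype.card_fin]
      ring
    rw [hprod, hcardAC, hcardC]
    obtain ⟨m, rfl⟩ : ∃ m, k = m + 1 := ⟨k - 1, by omega⟩
    simp only [Nat.add_sub_cancel]
    ring
end
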